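/- The pair of linear inequalities ∑_{i=1}^{m} p_i − ∑_{j=1}^{k} q_j − (m+k)·bd ≥ −k and ∑_{i=1}^{m} p_i − ∑_{j=1}^{k} q_j − bd ≤ m − 1, over binary variables p_i, q_j, bd ∈ {0,1}, hold simultaneously if and only if bd = 1 ⟺ (all p_i = 1 and all q_j = 0). -/
import Mathlib


structure NRule (α : Type) where
  head : α
  pos : Finset α
  neg : Finset α

def satRule {α : Type} (M : Set α) (r : NRule α) : Prop :=
  ↑r.pos ⊆ M → (↑r.neg ∩ M : Set α) = ∅ → r.head ∈ M

def isModel {α : Type} (M : Set α) (P : Set (NRule α)) : Prop :=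
  ∀ r ∈ P, satRule M r

def reduct {α : Type} (P : Set (NRule α)) (M : Set α) : Set (NRule α) :=
  (fun r => ⟨r.head, r.pos, ∅⟩) '' {r ∈ P | (↑r.neg ∩ M : Set α) = ∅}

def isMinModel {α : Type} (M : Set α) (P : Set (NRule α)) : Prop :=
  isModel M P ∧ ∀ M' ⊆ M, isModel M' P → M' = M

def isAnswerSet {α : Type} (M : Set α) (P : Set (NRule α)) : Prop :=
  isMinModel M (reduct P M)

def isSupported {α : Type} (M : Set α) (P : Set (NRule α)) : Prop :=
  isModel M P ∧ ∀ a ∈ M, ∃ r ∈ P, r.head = a ∧ ↑r.pos ⊆ M ∧ (↑r.neg ∩ M : Set α) = ∅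

def isDefinite {α : Type} (P : Set (NRule α)) : Prop :=
  ∀ r ∈ P, r.neg = ∅

def isLocallyStratified {α : Type} (P : Set (NRule α)) : Prop :=
  ∃ l : α → ℕ, ∀ r ∈ P, (∀ b ∈ r.pos, l b ≤ l r.head) ∧ (∀ c ∈ r.neg, l c < l r.head)

def hasLevelRanking {α : Type} (M : Set α) (P : Set (NRule α)) : Prop :=
  ∃ lr : α → ℕ, ∀ a ∈ M, ∃ r ∈ P, r.head = a ∧ ↑r.pos ⊆ M ∧ (↑r.neg ∩ M : Set α) = ∅ ∧
    ∀ b ∈ r.pos, lr b + 1 ≤ lr a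

theorem stmt_17 (m k : ℕ) (hmk : m + k ≥ 1) (p : Fin m → ℤ) (q : Fin k → ℤ)
    (bd : ℤ) (hp : ∀ i, p i = 0 ∨ p i = 1) (hq : ∀ j, q j = 0 ∨ q j = 1)
    (hbd : bd = 0 ∨ bd = 1) :
    ((∑ i, p i) - (∑ j, q j) - ((m : ℤ) + (k : ℤ)) * bd ≥ -(k : ℤ) ∧
     (∑ i, p i) - (∑ j, q j) - bd ≤ (m : ℤ) - 1)
    ↔ (bd = 1 ↔ ((∀ i, p i = 1) ∧ (∀ j, q j = 0))) := by
  have hS0 : 0 ≤ ∑ i, p i := Finset.sum_nonneg (fun i _ => by rcases hp i with h|h <;> omega)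
  have hS1 : ∑ i, p i ≤ (m:ℤ) := by
    calc ∑ i, p i ≤ ∑ _i : Fin m, (1:ℤ) :=
          Finset.sum_le_sum (fun i _ => by rcases hp i with h|h <;> omega)
    _ = m := by simp
  have hT0 : 0 ≤ ∑ j, q j := Finset.sum_nonneg (fun j _ => by rcases hq j with h|h <;> omega)
  have hT1 : ∑ j, q j ≤ (k:ℤ) := by
    calc ∑ j, q j ≤ ∑ _j : Fin k, (1:ℤ) :=
          Finset.sum_le_sum (fun j _ => by rcases hq j with h|h <;> omega)
    _ = k := by simp
  have hPiff : (∀ i, p i = 1) ↔ ∑ i, p i = (m:ℤ) := by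
    constructor
    · intro h; simp [h]
    · intro h i
      have hz : ∑ i : Fin m, (1 - p i) = 0 := by
        rw [Finset.sum_sub_distrib]; simp; omega
      have := (Finset.sum_eq_zero_iff_of_nonneg
        (fun i _ => by rcases hp i with h'|h' <;> omega : ∀ i ∈ Finset.univ, (0:ℤ) ≤ 1 - p i)).mp hz
      have := this i (Finset.mem_univ i); omega
  have hQiff : (∀ j, q j = 0) ↔ ∑ j, q j = 0 := by
    constructor
    · intro h; simp [h]
    · intro h j
      have := (Finset.sum_eq_zero_iff_of_nonneg
        (fun j _ => by rcases hq j with h'|h' <;> omega : ∀ j ∈ Finset.univ, (0:ℤ) ≤ q j)).mp h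
      exact this j (Finset.mem_univ j)
  rw [hPiff, hQiff]
  rcases hbd with h|h <;> subst h
  · simp only [mul_zero]
    omega
  · simp only [mul_one, true_iff]
    omega
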